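/- For every real α and every a ≠ 0, the maximally symmetric triple (a, a, a) (structure constants of a round metric on SU(2)) is a fixed point of the RG-2 bracket flow system if and only if αa² = −8; in particular such a steady soliton exists exactly when α < 0, with a = ±√(−8/α). -/
import Mathlib


noncomputable section

/-- `Q₁ = (a₂−a₃)² − 3a₁² + 2a₁a₂ + 2a₁a₃`. -/
def Q1 (a1 a2 a3 : ℝ) : ℝ := (a2 - a3) ^ 2 - 3 * a1 ^ 2 + 2 * a1 * a2 + 2 * a1 * a3

/-- `Q₂ = (a₁−a₃)² − 3a₂² + 2a₂a₁ + 2a₂a₃`. -/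
def Q2 (a1 a2 a3 : ℝ) : ℝ := (a1 - a3) ^ 2 - 3 * a2 ^ 2 + 2 * a2 * a1 + 2 * a2 * a3

/-- `Q₃ = (a₁−a₂)² − 3a₃² + 2a₃a₁ + 2a₃a₂`. -/
def Q3 (a1 a2 a3 : ℝ) : ℝ := (a1 - a2) ^ 2 - 3 * a3 ^ 2 + 2 * a3 * a1 + 2 * a3 * a2

/-- Right-hand side of the RG-2 bracket flow for `a₁`. -/
def F1 (α a1 a2 a3 : ℝ) : ℝ := (a1 / 2) * Q1 a1 a2 a3 * (1 + (α / 8) * Q1 a1 a2 a3)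

/-- Right-hand side of the RG-2 bracket flow for `a₂`. -/
def F2 (α a1 a2 a3 : ℝ) : ℝ := (a2 / 2) * Q2 a1 a2 a3 * (1 + (α / 8) * Q2 a1 a2 a3)

/-- Right-hand side of the RG-2 bracket flow for `a₃`. -/
def F3 (α a1 a2 a3 : ℝ) : ℝ := (a3 / 2) * Q3 a1 a2 a3 * (1 + (α / 8) * Q3 a1 a2 a3)

/-- A triple of structure constants is a fixed point of the RG-2 bracket flow
(a steady algebraic soliton of the two-loop renormalization group flow). -/
def IsFixedPoint (α a1 a2 a3 : ℝ) : Prop :=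
  F1 α a1 a2 a3 = 0 ∧ F2 α a1 a2 a3 = 0 ∧ F3 α a1 a2 a3 = 0

lemma key (α a : ℝ) (ha : a ≠ 0) : IsFixedPoint α a a a ↔ α * a ^ 2 = -8 := by
  have hQ : Q1 a a a = a ^ 2 := by simp [Q1]; ring
  constructor
  · rintro ⟨h1, -, -⟩
    rw [F1, hQ] at h1
    have h3 : a ^ 3 ≠ 0 := pow_ne_zero 3 ha
    have : (1 + α / 8 * a ^ 2) = 0 := by
      rcases mul_eq_zero.mp h1 with h | h
      · exact absurd (by nlinarith [mul_eq_zero.mp h] : a ^ 3 = 0) h3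
      · exact h
    nlinarith
  · intro h
    have : (1 + α / 8 * a ^ 2) = 0 := by nlinarith
    refine ⟨?_, ?_, ?_⟩ <;>
      · simp only [F1, F2, F3, Q1, Q2, Q3]
        linear_combination (a / 2 * a ^ 2) * this

/-- for every `α` and `a ≠ 0`, the maximally symmetric triple `(a,a,a)`
(round metric on `SU(2)`) is a fixed point of the RG-2 bracket flow iff `αa² = −8`; in
particular such a steady soliton exists exactly when `α < 0`, with `a = ±√(−8/α)`. -/
theorem stmt7 (α : ℝ) :
    (∀ a : ℝ, a ≠ 0 → (IsFixedPoint α a a a ↔ α * a ^ 2 = -8)) ∧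
    ((∃ a : ℝ, a ≠ 0 ∧ IsFixedPoint α a a a) ↔ α < 0) ∧
    (α < 0 → ∀ a : ℝ, a ≠ 0 →
      (IsFixedPoint α a a a ↔
        a = Real.sqrt (-8 / α) ∨ a = -Real.sqrt (-8 / α))) := by
  refine ⟨fun a ha => key α a ha, ?_, ?_⟩
  · constructor
    · rintro ⟨a, ha, hfp⟩
      have h := (key α a ha).mp hfp
      have h2 : 0 < a ^ 2 := by positivity
      nlinarith
    · intro hα
      have hpos : (0:ℝ) < -8 / α := div_pos_iff.mpr (Or.inr ⟨by linarith, hα⟩)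
      have hne : Real.sqrt (-8 / α) ≠ 0 := by
        rw [Real.sqrt_ne_zero']; exact hpos
      have hs : Real.sqrt (-8/α) ^ 2 = -8/α := Real.sq_sqrt hpos.le
      refine ⟨Real.sqrt (-8 / α), hne, (key α _ hne).mpr ?_⟩
      rw [hs, mul_comm, div_mul_cancel₀ _ (ne_of_lt hα)]
  · intro hα a ha
    rw [key α a ha]
    have hpos : (0:ℝ) < -8 / α := div_pos_iff.mpr (Or.inr ⟨by linarith, hα⟩)
    have hs : Real.sqrt (-8/α) ^ 2 = -8/α := Real.sq_sqrt hpos.le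
    constructor
    · intro h
      have : a ^ 2 = Real.sqrt (-8/α) ^ 2 := by
        rw [hs, eq_div_iff (ne_of_lt hα)]; linear_combination h
      exact sq_eq_sq_iff_eq_or_eq_neg.mp this
    · rintro (h | h) <;> subst h
      · rw [hs, mul_comm, div_mul_cancel₀ _ (ne_of_lt hα)]
      · rw [neg_sq, hs, mul_comm, div_mul_cancel₀ _ (ne_of_lt hα)]
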